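/- The function f₂(φ) = csc(φ)(φ - 2 cot(φ) + 2 φ cot²(φ)) satisfies |f₂(φ)| ≤ π/2 for all φ ∈ (-π/2, π/2] with φ ≠ 0, and f₂ is the derivative of f₁(φ) = csc²(φ)(sin(φ) - φ cos(φ)) on this domain. -/

import Mathlib

open Real

/-- `f₁(φ) = csc²(φ)(sin φ - φ cos φ)`. -/
noncomputable def f1 (φ : ℝ) : ℝ := (Real.sin φ - φ * Real.cos φ) / Real.sin φ ^ 2

/-- `f₂(φ) = csc(φ)(φ - 2 cot φ + 2 φ cot² φ)`. -/
noncomputable def f2 (φ : ℝ) : ℝ :=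
  (1 / Real.sin φ) *
    (φ - 2 * (Real.cos φ / Real.sin φ) + 2 * φ * (Real.cos φ / Real.sin φ) ^ 2)

lemma sin_lower_aux {x : ℝ} (h0 : 0 ≤ x) (h1 : x ≤ 1) :
    x - x ^ 3 / 6 - 5 / 96 * x ^ 4 ≤ Real.sin x := by
  have hb := Real.sin_bound (x := x) (by rw [abs_of_nonneg h0]; exact h1)
  rw [abs_of_nonneg h0] at hb
  have := abs_le.1 hb
  nlinarith [this.1, this.2, mul_nonneg (pow_nonneg h0 4) (sub_nonneg.2 h1)]

lemma poly_key {x : ℝ} (h0 : 0 < x) (h1 : x ≤ 1) :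
    2 * x - x * (x - x ^ 3 / 6 - 5 / 96 * x ^ 4) ^ 2 -
      2 * (x - x ^ 3 / 6 - 5 / 96 * x ^ 4) * (1 - x ^ 2 / 2)
      ≤ 157 / 100 * (x - x ^ 3 / 6 - 5 / 96 * x ^ 4) ^ 3 := by
  have hx : (0 : ℝ) ≤ x := h0.le
  have hx1 : (0 : ℝ) ≤ 1 - x := by linarith
  have key : 157 / 100 * (x - x ^ 3 / 6 - 5 / 96 * x ^ 4) ^ 3 -
      (2 * x - x * (x - x ^ 3 / 6 - 5 / 96 * x ^ 4) ^ 2 -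
        2 * (x - x ^ 3 / 6 - 5 / 96 * x ^ 4) * (1 - x ^ 2 / 2)) =
      x ^ 3 * ((371/300) * (1-x)^9 + (13231/1200) * x^1 * (1-x)^8 +
        (8547/200) * x^2 * (1-x)^7 + (902441/9600) * x^3 * (1-x)^6 +
        (1848613/14400) * x^4 * (1-x)^5 + (89321/800) * x^5 * (1-x)^4 +
        (168048073/2764800) * x^6 * (1-x)^3 + (713545/36864) * x^7 * (1-x)^2 +
        (74935/24576) * x^8 * (1-x)^1 + (18381/131072) * x^9) := by
    ring
  have hterm : (0:ℝ) ≤ x ^ 3 * ((371/300) * (1-x)^9 + (13231/1200) * x^1 * (1-x)^8 +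
        (8547/200) * x^2 * (1-x)^7 + (902441/9600) * x^3 * (1-x)^6 +
        (1848613/14400) * x^4 * (1-x)^5 + (89321/800) * x^5 * (1-x)^4 +
        (168048073/2764800) * x^6 * (1-x)^3 + (713545/36864) * x^7 * (1-x)^2 +
        (74935/24576) * x^8 * (1-x)^1 + (18381/131072) * x^9) := by
    refine mul_nonneg (pow_nonneg hx 3) ?_
    repeat' apply add_nonneg
    all_goals
      first
        | exact mul_nonneg (mul_nonneg (by norm_num) (pow_nonneg hx _)) (pow_nonneg hx1 _)
        | exact mul_nonneg (by norm_num) (pow_nonneg hx1 _)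
        | exact mul_nonneg (by norm_num) (pow_nonneg hx _)
  linarith [key, hterm]

lemma branch_small {x s c A : ℝ} (h0 : 0 < x) (h1 : x ≤ 1)
    (hu : x - x ^ 3 / 6 - 5 / 96 * x ^ 4 ≤ s)
    (hcl : 1 - x ^ 2 / 2 ≤ c) (hs0 : 0 < s)
    (hpyth : s ^ 2 + c ^ 2 = 1) (hA : 157 / 100 ≤ A) :
    x * (1 + c ^ 2) - 2 * s * c ≤ A * s ^ 3 := by
  have hx2 : x ^ 2 ≤ 1 := by nlinarith
  have h3 : x ^ 3 ≤ x := by nlinarith [mul_nonneg (by linarith : (0:ℝ) ≤ 1 - x ^ 2) h0.le]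
  have h4 : x ^ 4 ≤ x := by
    nlinarith [mul_nonneg (by linarith : (0:ℝ) ≤ 1 - x ^ 2) (sq_nonneg x)]
  have hu0 : 0 ≤ x - x ^ 3 / 6 - 5 / 96 * x ^ 4 := by linarith
  have hcl0 : 0 ≤ 1 - x ^ 2 / 2 := by nlinarith
  have hsc : (x - x ^ 3 / 6 - 5 / 96 * x ^ 4) * (1 - x ^ 2 / 2) ≤ s * c :=
    le_trans (mul_le_mul_of_nonneg_right hu hcl0) (mul_le_mul_of_nonneg_left hcl hs0.le)
  have hs2 : (x - x ^ 3 / 6 - 5 / 96 * x ^ 4) ^ 2 ≤ s ^ 2 := pow_le_pow_left₀ hu0 hu 2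
  have hs3 : (x - x ^ 3 / 6 - 5 / 96 * x ^ 4) ^ 3 ≤ s ^ 3 := pow_le_pow_left₀ hu0 hu 3
  have key := poly_key h0 h1
  have h1' : x * (1 + c ^ 2) - 2 * s * c = 2 * x - x * s ^ 2 - 2 * (s * c) := by
    linear_combination x * hpyth
  rw [h1']
  have hfin : 157 / 100 * (x - x ^ 3 / 6 - 5 / 96 * x ^ 4) ^ 3 ≤ A * s ^ 3 :=
    le_trans (by linarith) (mul_le_mul_of_nonneg_right hA (by positivity))
  have hxu : x * (x - x ^ 3 / 6 - 5 / 96 * x ^ 4) ^ 2 ≤ x * s ^ 2 :=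
    mul_le_mul_of_nonneg_left hs2 h0.le
  linarith

lemma branch_large {x s c : ℝ} (hxs : x ≤ π / 2 * s) (hc0 : 0 ≤ c)
    (hc2 : π * c ≤ 2) (hs0 : 0 < s) (hpyth : s ^ 2 + c ^ 2 = 1) :
    x * (1 + c ^ 2) - 2 * s * c ≤ π / 2 * s ^ 3 := by
  have base : π * c ^ 2 ≤ 2 * c := by
    nlinarith [mul_nonneg hc0 (by linarith : (0:ℝ) ≤ 2 - π * c)]
  have step1 : x * (1 + c ^ 2) - 2 * s * c ≤ π / 2 * s * (1 + c ^ 2) - 2 * s * c := by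
    nlinarith [mul_nonneg (sub_nonneg.2 hxs) (by positivity : (0:ℝ) ≤ 1 + c ^ 2)]
  have step2 : π / 2 * s * (1 + c ^ 2) - 2 * s * c ≤ π / 2 * s * (1 - c ^ 2) := by
    nlinarith [mul_nonneg hs0.le (by linarith : (0:ℝ) ≤ 2 * c - π * c ^ 2)]
  have step3 : π / 2 * s * (1 - c ^ 2) = π / 2 * s ^ 3 := by
    have h : (1 : ℝ) - c ^ 2 = s ^ 2 := by linarith
    rw [h]; ring
  linarith [step3.le]

/-- The key numerator inequality on `(0, π/2]`. -/
lemma num_le {φ : ℝ} (h0 : 0 < φ) (h1 : φ ≤ π / 2) :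
    φ * (1 + Real.cos φ ^ 2) - 2 * Real.sin φ * Real.cos φ ≤ π / 2 * Real.sin φ ^ 3 := by
  have hπ : 0 < π := Real.pi_pos
  have hs0 : 0 < Real.sin φ := Real.sin_pos_of_pos_of_lt_pi h0 (lt_of_le_of_lt h1 (by linarith))
  have hc0 : 0 ≤ Real.cos φ := Real.cos_nonneg_of_mem_Icc ⟨by linarith, h1⟩
  have hpyth : Real.sin φ ^ 2 + Real.cos φ ^ 2 = 1 := Real.sin_sq_add_cos_sq φ
  rcases le_or_gt φ 1 with hφ1 | hφ1
  · exact branch_small h0 hφ1 (sin_lower_aux h0.le hφ1) Real.one_sub_sq_div_two_le_cos hs0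
      hpyth (by linarith [pi_gt_d2])
  · have hφs : φ ≤ π / 2 * Real.sin φ := by
      have h2 : 2 / π * φ ≤ Real.sin φ := Real.mul_le_sin h0.le h1
      calc φ = π / 2 * (2 / π * φ) := by field_simp
        _ ≤ π / 2 * Real.sin φ := mul_le_mul_of_nonneg_left h2 (by positivity)
    have hc1 : Real.cos φ ≤ Real.cos 1 :=
      Real.cos_le_cos_of_nonneg_of_le_pi (by norm_num) (by linarith) hφ1.le
    have hcb : Real.cos 1 ≤ 53 / 96 := by
      have hb := (abs_le.1 (Real.cos_bound (x := 1) (by norm_num))).2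
      norm_num at hb
      linarith
    have hc2 : π * Real.cos φ ≤ 2 := by nlinarith [pi_lt_d2]
    exact branch_large hφs hc0 hc2 hs0 hpyth

lemma num_ge {φ : ℝ} (h0 : 0 < φ) (h1 : φ ≤ π / 2) :
    0 ≤ φ * (1 + Real.cos φ ^ 2) - 2 * Real.sin φ * Real.cos φ := by
  have hπ : 0 < π := Real.pi_pos
  have hs0 : 0 < Real.sin φ :=
    Real.sin_pos_of_pos_of_lt_pi h0 (lt_of_le_of_lt h1 (by linarith))
  have hsφ : Real.sin φ ≤ φ := (Real.sin_lt h0).le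
  have hc0 : 0 ≤ Real.cos φ := Real.cos_nonneg_of_mem_Icc ⟨by linarith, h1⟩
  have hc1 : Real.cos φ ≤ 1 := Real.cos_le_one φ
  nlinarith [mul_nonneg (sub_nonneg.2 hsφ) (by positivity : (0:ℝ) ≤ 1 + Real.cos φ ^ 2),
    mul_nonneg hs0.le (sq_nonneg (1 - Real.cos φ))]

lemma f2_eq {φ : ℝ} (hs : Real.sin φ ≠ 0) :
    f2 φ = (φ * (1 + Real.cos φ ^ 2) - 2 * Real.sin φ * Real.cos φ) / Real.sin φ ^ 3 := by
  have hpyth : Real.sin φ ^ 2 + Real.cos φ ^ 2 = 1 := Real.sin_sq_add_cos_sq φ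
  rw [f2]
  field_simp
  linear_combination φ * hpyth

lemma f2_pos_bound {φ : ℝ} (h0 : 0 < φ) (h1 : φ ≤ π / 2) :
    0 ≤ f2 φ ∧ f2 φ ≤ π / 2 := by
  have hs0 : 0 < Real.sin φ :=
    Real.sin_pos_of_pos_of_lt_pi h0 (lt_of_le_of_lt h1 (by linarith [pi_gt_three]))
  rw [f2_eq hs0.ne']
  have hs3 : 0 < Real.sin φ ^ 3 := by positivity
  constructor
  · exact div_nonneg (num_ge h0 h1) hs3.le
  · rw [div_le_iff₀ hs3]
    calc φ * (1 + Real.cos φ ^ 2) - 2 * Real.sin φ * Real.cos φ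
        ≤ π / 2 * Real.sin φ ^ 3 := num_le h0 h1
      _ = π / 2 * Real.sin φ ^ 3 := rfl

lemma f2_even (φ : ℝ) : f2 (-φ) = f2 φ := by
  simp [f2, Real.sin_neg, Real.cos_neg]
  ring

theorem f2_bound_and_deriv :
    ∀ φ ∈ Set.Ioc (-(π / 2)) (π / 2), φ ≠ 0 →
      |f2 φ| ≤ π / 2 ∧ HasDerivAt f1 (f2 φ) φ := by
  intro φ hφ hφ0
  obtain ⟨hl, hr⟩ := hφ
  have hπ : 0 < π := Real.pi_pos
  have hs : Real.sin φ ≠ 0 := by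
    intro h
    rcases lt_or_gt_of_ne hφ0 with hneg | hpos
    · have : 0 < Real.sin (-φ) :=
        Real.sin_pos_of_pos_of_lt_pi (by linarith) (by linarith)
      rw [Real.sin_neg, h] at this; linarith
    · have : 0 < Real.sin φ :=
        Real.sin_pos_of_pos_of_lt_pi hpos (by linarith)
      linarith [this.ne' h]
  constructor
  · -- the bound
    rcases lt_or_gt_of_ne hφ0 with hneg | hpos
    · have h := f2_pos_bound (φ := -φ) (by linarith) (by linarith)
      rw [f2_even] at h
      rw [abs_le]; exact ⟨by linarith [h.1], h.2⟩
    · have h := f2_pos_bound hpos hr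
      rw [abs_le]; exact ⟨by linarith [h.1], h.2⟩
  · -- the derivative
    have h1 : HasDerivAt (fun x : ℝ => Real.sin x - x * Real.cos x)
        (φ * Real.sin φ) φ := by
      have hsin : HasDerivAt Real.sin (Real.cos φ) φ := Real.hasDerivAt_sin φ
      have hmul : HasDerivAt (fun x : ℝ => x * Real.cos x)
          (1 * Real.cos φ + φ * (-Real.sin φ)) φ :=
        (hasDerivAt_id φ).mul (Real.hasDerivAt_cos φ)
      have := hsin.sub hmul
      refine this.congr_deriv ?_
      ring
    have h2 : HasDerivAt (fun x : ℝ => Real.sin x ^ 2)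
        (2 * Real.sin φ * Real.cos φ) φ := by
      have := (Real.hasDerivAt_sin φ).pow 2
      refine this.congr_deriv ?_
      ring
    have hdiv := h1.div h2 (pow_ne_zero 2 hs)
    have heq : (φ * Real.sin φ * Real.sin φ ^ 2 -
        (Real.sin φ - φ * Real.cos φ) * (2 * Real.sin φ * Real.cos φ)) /
        (Real.sin φ ^ 2) ^ 2 = f2 φ := by
      rw [f2_eq hs]
      have hpyth : Real.sin φ ^ 2 + Real.cos φ ^ 2 = 1 := Real.sin_sq_add_cos_sq φ
      field_simp
      linear_combination φ * hpyth
    rw [heq] at hdiv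
    exact hdiv
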